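/- Sufficiency in the closed-loop design separation (Corollary 14, converse direction): Let K := RatFunc ℝ with z := RatFunc.X, let A : n×n and B : n×m be real matrices over K, and let Φx : n×n, Φu : m×n, P_c : n×n, M_c : m×n be matrices over K satisfying (z•1 − A) * Φx − B * Φu = 1, Φx * Δc = P_c and Φu * Δc = M_c, where Δc := (z•1 − A) * P_c − B * M_c is assumed invertible. Then, with R := [[A + (1−z)•1, B, 0],[0, 0, z•M_c],[1, 0, 1 − z•P_c]], the matrix S := [[Φx, Φx*B, Φx*(z•1−A) − 1],[Φu, 1 + Φu*B, Φu*(z•1−A)],[z⁻¹•Δc⁻¹, z⁻¹•(Δc⁻¹ * B), z⁻¹•(Δc⁻¹ * (z•1−A))]] satisfies S * (1 − R) = 1 and (1 − R) * S = 1. -/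

import Mathlib

open Matrix

noncomputable section

set_option synthInstance.maxHeartbeats 1000000
set_option maxHeartbeats 1000000
set_option synthInstance.maxHeartbeats 10000000
set_option maxHeartbeats 10000000

/-- A 3×3 block matrix. -/
def b3 {α n₁ n₂ n₃ m₁ m₂ m₃ : Type*}
    (M₁₁ : Matrix n₁ m₁ α) (M₁₂ : Matrix n₁ m₂ α) (M₁₃ : Matrix n₁ m₃ α)
    (M₂₁ : Matrix n₂ m₁ α) (M₂₂ : Matrix n₂ m₂ α) (M₂₃ : Matrix n₂ m₃ α)
    (M₃₁ : Matrix n₃ m₁ α) (M₃₂ : Matrix n₃ m₂ α) (M₃₃ : Matrix n₃ m₃ α) :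
    Matrix (n₁ ⊕ n₂ ⊕ n₃) (m₁ ⊕ m₂ ⊕ m₃) α :=
  Matrix.fromBlocks M₁₁ (Matrix.fromCols M₁₂ M₁₃)
    (Matrix.fromRows M₂₁ M₃₁) (Matrix.fromBlocks M₂₂ M₂₃ M₃₂ M₃₃)

/-- A real constant matrix regarded as a matrix of rational transfer functions. -/
def mR {n m : Type*} (M : Matrix n m ℝ) : Matrix n m (RatFunc ℝ) :=
  M.map (algebraMap ℝ (RatFunc ℝ))

/-- The transfer-function variable `z`. -/
def zz : RatFunc ℝ := RatFunc.X

lemma b3_one {α n₁ n₂ n₃ : Type*} [CommRing α] [DecidableEq n₁] [DecidableEq n₂] [DecidableEq n₃] :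
    b3 (1 : Matrix n₁ n₁ α) 0 0 0 (1 : Matrix n₂ n₂ α) 0 0 0 (1 : Matrix n₃ n₃ α) = 1 := by
  ext (i|i|i) (j|j|j) <;>
  simp [b3, Matrix.fromBlocks, Matrix.fromCols, Matrix.fromRows_apply_inl, Matrix.fromRows_apply_inr, Matrix.one_apply]

lemma b3_sub {α n₁ n₂ n₃ m₁ m₂ m₃ : Type*} [CommRing α]
    (A₁₁ : Matrix n₁ m₁ α) (A₁₂ : Matrix n₁ m₂ α) (A₁₃ : Matrix n₁ m₃ α)
    (A₂₁ : Matrix n₂ m₁ α) (A₂₂ : Matrix n₂ m₂ α) (A₂₃ : Matrix n₂ m₃ α)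
    (A₃₁ : Matrix n₃ m₁ α) (A₃₂ : Matrix n₃ m₂ α) (A₃₃ : Matrix n₃ m₃ α)
    (B₁₁ : Matrix n₁ m₁ α) (B₁₂ : Matrix n₁ m₂ α) (B₁₃ : Matrix n₁ m₃ α)
    (B₂₁ : Matrix n₂ m₁ α) (B₂₂ : Matrix n₂ m₂ α) (B₂₃ : Matrix n₂ m₃ α)
    (B₃₁ : Matrix n₃ m₁ α) (B₃₂ : Matrix n₃ m₂ α) (B₃₃ : Matrix n₃ m₃ α) :
    b3 A₁₁ A₁₂ A₁₃ A₂₁ A₂₂ A₂₃ A₃₁ A₃₂ A₃₃ - b3 B₁₁ B₁₂ B₁₃ B₂₁ B₂₂ B₂₃ B₃₁ B₃₂ B₃₃ =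
    b3 (A₁₁-B₁₁) (A₁₂-B₁₂) (A₁₃-B₁₃) (A₂₁-B₂₁) (A₂₂-B₂₂) (A₂₃-B₂₃) (A₃₁-B₃₁) (A₃₂-B₃₂) (A₃₃-B₃₃) := by
  ext (i|i|i) (j|j|j) <;>
  simp [b3, Matrix.fromBlocks, Matrix.fromCols, Matrix.fromRows_apply_inl, Matrix.fromRows_apply_inr]

lemma b3_mul {α n₁ n₂ n₃ m₁ m₂ m₃ p₁ p₂ p₃ : Type*} [CommRing α]
    [Fintype m₁] [Fintype m₂] [Fintype m₃]
    (A₁₁ : Matrix n₁ m₁ α) (A₁₂ : Matrix n₁ m₂ α) (A₁₃ : Matrix n₁ m₃ α)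
    (A₂₁ : Matrix n₂ m₁ α) (A₂₂ : Matrix n₂ m₂ α) (A₂₃ : Matrix n₂ m₃ α)
    (A₃₁ : Matrix n₃ m₁ α) (A₃₂ : Matrix n₃ m₂ α) (A₃₃ : Matrix n₃ m₃ α)
    (B₁₁ : Matrix m₁ p₁ α) (B₁₂ : Matrix m₁ p₂ α) (B₁₃ : Matrix m₁ p₃ α)
    (B₂₁ : Matrix m₂ p₁ α) (B₂₂ : Matrix m₂ p₂ α) (B₂₃ : Matrix m₂ p₃ α)
    (B₃₁ : Matrix m₃ p₁ α) (B₃₂ : Matrix m₃ p₂ α) (B₃₃ : Matrix m₃ p₃ α) :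
    b3 A₁₁ A₁₂ A₁₃ A₂₁ A₂₂ A₂₃ A₃₁ A₃₂ A₃₃ * b3 B₁₁ B₁₂ B₁₃ B₂₁ B₂₂ B₂₃ B₃₁ B₃₂ B₃₃ =
    b3 (A₁₁*B₁₁ + A₁₂*B₂₁ + A₁₃*B₃₁) (A₁₁*B₁₂ + A₁₂*B₂₂ + A₁₃*B₃₂) (A₁₁*B₁₃ + A₁₂*B₂₃ + A₁₃*B₃₃)
       (A₂₁*B₁₁ + A₂₂*B₂₁ + A₂₃*B₃₁) (A₂₁*B₁₂ + A₂₂*B₂₂ + A₂₃*B₃₂) (A₂₁*B₁₃ + A₂₂*B₂₃ + A₂₃*B₃₃)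
       (A₃₁*B₁₁ + A₃₂*B₂₁ + A₃₃*B₃₁) (A₃₁*B₁₂ + A₃₂*B₂₂ + A₃₃*B₃₂) (A₃₁*B₁₃ + A₃₂*B₂₃ + A₃₃*B₃₃) := by
  ext (i|i|i) (j|j|j) <;>
  simp [b3, Matrix.fromBlocks, Matrix.fromCols, Matrix.fromRows_apply_inl, Matrix.fromRows_apply_inr, Matrix.mul_apply,
    Fintype.sum_sum_type, Finset.sum_add_distrib] <;> abel


lemma b3_congr {α n₁ n₂ n₃ m₁ m₂ m₃ : Type*}
    {A₁₁ B₁₁ : Matrix n₁ m₁ α} {A₁₂ B₁₂ : Matrix n₁ m₂ α} {A₁₃ B₁₃ : Matrix n₁ m₃ α}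
    {A₂₁ B₂₁ : Matrix n₂ m₁ α} {A₂₂ B₂₂ : Matrix n₂ m₂ α} {A₂₃ B₂₃ : Matrix n₂ m₃ α}
    {A₃₁ B₃₁ : Matrix n₃ m₁ α} {A₃₂ B₃₂ : Matrix n₃ m₂ α} {A₃₃ B₃₃ : Matrix n₃ m₃ α}
    (h₁₁ : A₁₁ = B₁₁) (h₁₂ : A₁₂ = B₁₂) (h₁₃ : A₁₃ = B₁₃)
    (h₂₁ : A₂₁ = B₂₁) (h₂₂ : A₂₂ = B₂₂) (h₂₃ : A₂₃ = B₂₃)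
    (h₃₁ : A₃₁ = B₃₁) (h₃₂ : A₃₂ = B₃₂) (h₃₃ : A₃₃ = B₃₃) :
    b3 A₁₁ A₁₂ A₁₃ A₂₁ A₂₂ A₂₃ A₃₁ A₃₂ A₃₃ = b3 B₁₁ B₁₂ B₁₃ B₂₁ B₂₂ B₂₃ B₃₁ B₃₂ B₃₃ := by
  rw [h₁₁, h₁₂, h₁₃, h₂₁, h₂₂, h₂₃, h₃₁, h₃₂, h₃₃]

/-- **Sufficiency in the closed-loop design separation** (Corollary 14, converse
direction).  If `(Φx, Φu)` satisfy the SLP constraint, `(P_c, M_c)` realize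
`(Φx, Φu)` in the sense `Φx Δc = P_c`, `Φu Δc = M_c` with
`Δc := (z•1 - A) P_c - B M_c` invertible, then the exhibited matrix `S` is a two-sided
inverse of `1 - R` for the realization `R` of Fig. 8. -/
theorem closed_loop_separation_sufficiency {n m : Type*} [Fintype n] [Fintype m]
    [DecidableEq n] [DecidableEq m]
    (A : Matrix n n ℝ) (B : Matrix n m ℝ)
    (Φx : Matrix n n (RatFunc ℝ)) (Φu : Matrix m n (RatFunc ℝ))
    (Pc : Matrix n n (RatFunc ℝ)) (Mc : Matrix m n (RatFunc ℝ))
    (hSLP : (zz • (1 : Matrix n n (RatFunc ℝ)) - mR A) * Φx - mR B * Φu = 1)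
    (hP : Φx * ((zz • (1 : Matrix n n (RatFunc ℝ)) - mR A) * Pc - mR B * Mc) = Pc)
    (hM : Φu * ((zz • (1 : Matrix n n (RatFunc ℝ)) - mR A) * Pc - mR B * Mc) = Mc)
    (hΔ : IsUnit ((zz • (1 : Matrix n n (RatFunc ℝ)) - mR A) * Pc - mR B * Mc)) :
    let Δc := (zz • (1 : Matrix n n (RatFunc ℝ)) - mR A) * Pc - mR B * Mc
    let Rr := b3 (mR A + (1 - zz) • (1 : Matrix n n (RatFunc ℝ))) (mR B)
        (0 : Matrix n n (RatFunc ℝ))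
        (0 : Matrix m n (RatFunc ℝ)) (0 : Matrix m m (RatFunc ℝ)) (zz • Mc)
        (1 : Matrix n n (RatFunc ℝ)) (0 : Matrix n m (RatFunc ℝ))
        ((1 : Matrix n n (RatFunc ℝ)) - zz • Pc)
    let Sr := b3 Φx (Φx * mR B) (Φx * (zz • (1 : Matrix n n (RatFunc ℝ)) - mR A) - 1)
        Φu (1 + Φu * mR B) (Φu * (zz • (1 : Matrix n n (RatFunc ℝ)) - mR A))
        (zz⁻¹ • Δc⁻¹) (zz⁻¹ • (Δc⁻¹ * mR B))
        (zz⁻¹ • (Δc⁻¹ * (zz • (1 : Matrix n n (RatFunc ℝ)) - mR A)))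
    Sr * (1 - Rr) = 1 ∧ (1 - Rr) * Sr = 1 := by
  intro Δc Rr Sr
  simp only [Sr, Rr, Δc]
  set E : Matrix n n (RatFunc ℝ) := zz • (1 : Matrix n n (RatFunc ℝ)) - mR A with hEdef
  set Bm : Matrix n m (RatFunc ℝ) := mR B with hBmdef
  set Δ : Matrix n n (RatFunc ℝ) := E * Pc - Bm * Mc with hΔdef
  have hz : (zz : RatFunc ℝ) ≠ 0 := RatFunc.X_ne_zero
  have hz1 : zz⁻¹ * zz = (1 : RatFunc ℝ) := inv_mul_cancel₀ hz
  have hz2 : zz * zz⁻¹ = (1 : RatFunc ℝ) := mul_inv_cancel₀ hz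
  have hdet : IsUnit Δ.det := (Matrix.isUnit_iff_isUnit_det _).mp hΔ
  have hinv1 : Δ * Δ⁻¹ = 1 := Matrix.mul_nonsing_inv _ hdet
  have hinv2 : Δ⁻¹ * Δ = 1 := Matrix.nonsing_inv_mul _ hdet
  have hMc' : Mc * Δ⁻¹ = Φu := by rw [← hM, Matrix.mul_assoc, hinv1, Matrix.mul_one]
  have hPc' : Pc * Δ⁻¹ = Φx := by rw [← hP, Matrix.mul_assoc, hinv1, Matrix.mul_one]
  have hE : E * Φx = 1 + Bm * Φu := by rw [← hSLP]; abel
  have key2 : Φx * (E * Pc) = Pc + Φx * (Bm * Mc) := by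
    rw [← sub_eq_iff_eq_add, ← Matrix.mul_sub, ← hΔdef]; exact hP
  have keyM2 : Φu * (E * Pc) = Mc + Φu * (Bm * Mc) := by
    rw [← sub_eq_iff_eq_add, ← Matrix.mul_sub, ← hΔdef]; exact hM
  have key32 : Δ⁻¹ * (E * Pc) = 1 + Δ⁻¹ * (Bm * Mc) := by
    rw [← sub_eq_iff_eq_add, ← Matrix.mul_sub, ← hΔdef]; exact hinv2
  have k4 : E * (Φx * Bm) = Bm + Bm * (Φu * Bm) := by
    rw [← Matrix.mul_assoc, hE, Matrix.add_mul, Matrix.one_mul, Matrix.mul_assoc]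
  have k5 : E * (Φx * E) = E + Bm * (Φu * E) := by
    rw [← Matrix.mul_assoc, hE, Matrix.add_mul, Matrix.one_mul, Matrix.mul_assoc]
  have k6 : Mc * (Δ⁻¹ * Bm) = Φu * Bm := by rw [← Matrix.mul_assoc, hMc']
  have k7 : Mc * (Δ⁻¹ * E) = Φu * E := by rw [← Matrix.mul_assoc, hMc']
  have k8 : Pc * (Δ⁻¹ * Bm) = Φx * Bm := by rw [← Matrix.mul_assoc, hPc']
  have k9 : Pc * (Δ⁻¹ * E) = Φx * E := by rw [← Matrix.mul_assoc, hPc']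
  have honeR : (1 : Matrix (n ⊕ m ⊕ n) (n ⊕ m ⊕ n) (RatFunc ℝ)) -
      b3 (mR A + (1 - zz) • (1 : Matrix n n (RatFunc ℝ))) Bm 0 0 0 (zz • Mc) 1 0
        ((1 : Matrix n n (RatFunc ℝ)) - zz • Pc) =
      b3 E (-Bm) 0 0 1 (-(zz • Mc)) (-1) 0 (zz • Pc) := by
    rw [← b3_one, b3_sub]
    exact b3_congr (by rw [hEdef, sub_smul, one_smul]; abel) (zero_sub _) (sub_zero _)
      (sub_zero _) (sub_zero _) (zero_sub _) (zero_sub _) (sub_zero _) (sub_sub_cancel _ _)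
  rw [honeR]
  constructor
  · rw [b3_mul, ← b3_one]
    refine b3_congr ?_ ?_ ?_ ?_ ?_ ?_ ?_ ?_ ?_ <;>
      simp only [Matrix.mul_zero, Matrix.zero_mul, Matrix.mul_one, Matrix.one_mul,
        Matrix.mul_neg, Matrix.neg_mul, Matrix.mul_assoc, Matrix.mul_sub, Matrix.sub_mul,
        Matrix.mul_add, Matrix.add_mul, Matrix.smul_mul, Matrix.mul_smul, smul_smul, hz1, hz2,
        one_smul, smul_zero, key2, keyM2, key32, smul_sub, smul_add, smul_neg] <;>
      abel
  · rw [b3_mul, ← b3_one]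
    refine b3_congr ?_ ?_ ?_ ?_ ?_ ?_ ?_ ?_ ?_ <;>
      simp only [Matrix.mul_zero, Matrix.zero_mul, Matrix.mul_one, Matrix.one_mul,
        Matrix.mul_neg, Matrix.neg_mul, Matrix.mul_assoc, Matrix.mul_sub, Matrix.sub_mul,
        Matrix.mul_add, Matrix.add_mul, Matrix.smul_mul, Matrix.mul_smul, smul_smul, hz1, hz2,
        one_smul, smul_zero, hE, k4, k5, hMc', k6, k7, hPc', k8, k9,
        smul_sub, smul_add, smul_neg] <;>
      abel


end
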